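/- Let R be a commutative ring in which every R-module has finite projective dimension (R is 'regular'). If D is a differential R-module with H(D) = 0 whose underlying R-module is projective, then the image of δ^D is a projective R-module. -/

import Mathlib

universe u

/-- `pdLE R n M` : the `R`-module `M` has projective dimension at most `n`. -/
def pdLE (R : Type u) [Ring R] : ℕ → ModuleCat.{u} R → Prop
  | 0, M => Module.Projective R M
  | n + 1, M => ∃ (P : ModuleCat.{u} R) (f : P →ₗ[R] M),
      Module.Projective R P ∧ Function.Surjective f ∧
      pdLE R n (ModuleCat.of R (LinearMap.ker f))

section Aux

variable {R : Type u} [CommRing R]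

/-- Splitting lemma: a surjection onto a projective module splits, giving a
product decomposition of the source. -/
theorem split_nonempty {A B : Type u} [AddCommGroup A] [Module R A]
    [AddCommGroup B] [Module R B] (g : A →ₗ[R] B) (hg : Function.Surjective g)
    (hB : Module.Projective R B) :
    Nonempty (A ≃ₗ[R] (LinearMap.ker g × B)) := by
  obtain ⟨s, hs⟩ := Module.projective_lifting_property g LinearMap.id hg
  have hgs : ∀ b, g (s b) = b := fun b => DFunLike.congr_fun hs b
  refine ⟨{ toFun := fun a => (⟨a - s (g a), by simp [LinearMap.mem_ker, hgs]⟩, g a)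
            invFun := fun x => x.1.1 + s x.2
            map_add' := fun a b => by
              ext <;> simp <;> abel
            map_smul' := fun r a => by
              ext <;> simp [smul_sub]
            left_inv := fun a => by simp
            right_inv := fun x => by
              have h1 : g x.1.1 = 0 := x.1.2
              ext <;> simp [h1, hgs] }⟩

/-- Schanuel's lemma. -/
theorem schanuel_nonempty {M P Q : Type u} [AddCommGroup M] [Module R M]
    [AddCommGroup P] [Module R P] [AddCommGroup Q] [Module R Q]
    (f : P →ₗ[R] M) (g : Q →ₗ[R] M) (hP : Module.Projective R P)
    (hQ : Module.Projective R Q) (hf : Function.Surjective f)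
    (hg : Function.Surjective g) :
    Nonempty ((LinearMap.ker f × Q) ≃ₗ[R] (LinearMap.ker g × P)) := by
  set d : P × Q →ₗ[R] M := f.comp (LinearMap.fst R P Q) - g.comp (LinearMap.snd R P Q) with hd
  set X : Submodule R (P × Q) := LinearMap.ker d with hX
  have memX : ∀ x : P × Q, x ∈ X ↔ f x.1 = g x.2 := by
    intro x
    simp [hX, hd, LinearMap.mem_ker, sub_eq_zero]
  -- the two projections from X
  let πP : X →ₗ[R] P := (LinearMap.fst R P Q).comp X.subtype
  let πQ : X →ₗ[R] Q := (LinearMap.snd R P Q).comp X.subtype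
  have hπP : Function.Surjective πP := by
    intro p
    obtain ⟨q, hq⟩ := hg (f p)
    exact ⟨⟨(p, q), (memX (p, q)).2 hq.symm⟩, rfl⟩
  have hπQ : Function.Surjective πQ := by
    intro q
    obtain ⟨p, hp⟩ := hf (g q)
    exact ⟨⟨(p, q), (memX (p, q)).2 hp⟩, rfl⟩
  -- kernel of πP is iso to ker g
  have eP : (LinearMap.ker πP) ≃ₗ[R] LinearMap.ker g :=
    { toFun := fun x => ⟨x.1.1.2, by
        have hx : f x.1.1.1 = g x.1.1.2 := (memX x.1.1).1 x.1.2
        have h0 : x.1.1.1 = 0 := x.2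
        rw [LinearMap.mem_ker, ← hx, h0, map_zero]⟩
      invFun := fun y => ⟨⟨(0, y.1), by
          rw [memX]; simp [y.2.out]⟩, by
          simp [πP, LinearMap.mem_ker]⟩
      map_add' := fun a b => rfl
      map_smul' := fun r a => rfl
      left_inv := fun a => by
        apply Subtype.ext; apply Subtype.ext
        have h0 : a.1.1.1 = 0 := a.2
        exact Prod.ext h0.symm rfl
      right_inv := fun y => rfl }
  have eQ : (LinearMap.ker πQ) ≃ₗ[R] LinearMap.ker f :=
    { toFun := fun x => ⟨x.1.1.1, by
        have hx : f x.1.1.1 = g x.1.1.2 := (memX x.1.1).1 x.1.2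
        have h0 : x.1.1.2 = 0 := x.2
        rw [LinearMap.mem_ker, hx, h0, map_zero]⟩
      invFun := fun y => ⟨⟨(y.1, 0), by
          rw [memX]; simp [y.2.out]⟩, by
          simp [πQ, LinearMap.mem_ker]⟩
      map_add' := fun a b => rfl
      map_smul' := fun r a => rfl
      left_inv := fun a => by
        apply Subtype.ext; apply Subtype.ext
        have h0 : a.1.1.2 = 0 := a.2
        exact Prod.ext rfl h0.symm
      right_inv := fun y => rfl }
  obtain ⟨e1⟩ := split_nonempty πP hπP hP
  obtain ⟨e2⟩ := split_nonempty πQ hπQ hQ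
  exact ⟨(eQ.prodCongr (LinearEquiv.refl R Q)).symm.trans
    (e2.symm.trans (e1.trans (eP.prodCongr (LinearEquiv.refl R P))))⟩

/-- `pdLE` is invariant under linear equivalence. -/
theorem pdLE_congr {M N : Type u} [AddCommGroup M] [Module R M]
    [AddCommGroup N] [Module R N] (e : M ≃ₗ[R] N) :
    ∀ n, pdLE R n (ModuleCat.of R M) → pdLE R n (ModuleCat.of R N) := by
  intro n
  match n with
  | 0 =>
    intro h
    haveI : Module.Projective R M := h
    exact Module.Projective.of_equiv e
  | n + 1 =>
    rintro ⟨P, f, hP, hf, hk⟩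
    refine ⟨P, e.toLinearMap ∘ₗ f, hP, e.surjective.comp hf, ?_⟩
    rwa [show e.toLinearMap ∘ₗ f = (e : M →ₗ[R] N).comp f from rfl,
      LinearEquiv.ker_comp]

/-- `pdLE` is stable under taking a product with a projective module. -/
theorem pdLE_prod {Q : Type u} [AddCommGroup Q] [Module R Q]
    (hQ : Module.Projective R Q) :
    ∀ n (M : Type u) [AddCommGroup M] [Module R M],
      pdLE R n (ModuleCat.of R M) → pdLE R n (ModuleCat.of R (M × Q)) := by
  intro n
  induction n with
  | zero =>
    intro M _ _ h
    haveI : Module.Projective R M := h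
    have : Module.Projective R (M × Q) := inferInstance
    exact this
  | succ n ih =>
    rintro M _ _ ⟨P, f, hP, hf, hk⟩
    haveI := hP
    refine ⟨ModuleCat.of R (P × Q), f.prodMap LinearMap.id,
      (inferInstance : Module.Projective R (P × Q)),
      hf.prodMap Function.surjective_id, ?_⟩
    have hmem : ∀ y : P × Q,
        y ∈ LinearMap.ker (f.prodMap (LinearMap.id : Q →ₗ[R] Q)) ↔
        f y.1 = 0 ∧ y.2 = 0 := by
      intro y
      simp [LinearMap.mem_ker, Prod.ext_iff]
    -- transfer along the iso ker f ≃ ker (prodMap f id)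
    have e : (LinearMap.ker f : Type u) ≃ₗ[R]
        LinearMap.ker (f.prodMap (LinearMap.id : Q →ₗ[R] Q)) :=
      { toFun := fun x => ⟨(x.1, 0), (hmem _).2 ⟨x.2, rfl⟩⟩
        invFun := fun y => ⟨y.1.1, ((hmem _).1 y.2).1⟩
        map_add' := fun a b => by apply Subtype.ext; simp
        map_smul' := fun r a => by apply Subtype.ext; simp
        left_inv := fun a => rfl
        right_inv := fun y => by
          apply Subtype.ext
          exact Prod.ext rfl (((hmem _).1 y.2).2).symm }
    exact pdLE_congr e n hk

/-- Kernel of the composition of a surjection onto a product with the first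
projection, when the second factor is projective. -/
theorem ker_fst_comp_nonempty {X N Q : Type u} [AddCommGroup X] [Module R X]
    [AddCommGroup N] [Module R N] [AddCommGroup Q] [Module R Q]
    (φ : X →ₗ[R] N × Q) (hφ : Function.Surjective φ)
    (hQ : Module.Projective R Q) :
    Nonempty ((LinearMap.ker ((LinearMap.fst R N Q).comp φ) : Type u) ≃ₗ[R]
      (LinearMap.ker φ × Q)) := by
  set h : X →ₗ[R] N := (LinearMap.fst R N Q).comp φ with hh
  let w : (LinearMap.ker h : Type u) →ₗ[R] Q :=
    (LinearMap.snd R N Q).comp (φ.comp (LinearMap.ker h).subtype)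
  have hw : Function.Surjective w := by
    intro q
    obtain ⟨x, hx⟩ := hφ (0, q)
    refine ⟨⟨x, ?_⟩, ?_⟩
    · simp [hh, LinearMap.mem_ker, hx]
    · simp [w, hx]
  have ew : (LinearMap.ker w) ≃ₗ[R] LinearMap.ker φ :=
    { toFun := fun z => ⟨z.1.1, by
        have h1 : (φ z.1.1).1 = 0 := z.1.2
        have h2 : (φ z.1.1).2 = 0 := z.2
        rw [LinearMap.mem_ker]
        exact Prod.ext h1 h2⟩
      invFun := fun y => ⟨⟨y.1, by
          have : φ y.1 = 0 := y.2
          simp [hh, LinearMap.mem_ker, this]⟩, by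
          have : φ y.1 = 0 := y.2
          simp [w, LinearMap.mem_ker, this]⟩
      map_add' := fun a b => rfl
      map_smul' := fun r a => rfl
      left_inv := fun a => by apply Subtype.ext; apply Subtype.ext; rfl
      right_inv := fun y => rfl }
  obtain ⟨e⟩ := split_nonempty w hw hQ
  exact ⟨e.trans (ew.prodCongr (LinearEquiv.refl R Q))⟩

/-- Dimension shifting: if `M` has projective dimension at most `n+1` then
the kernel of any projective surjection onto `M` has dimension at most `n`. -/
theorem pdLE_ker_of_pdLE_succ {M P : Type u} [AddCommGroup M] [Module R M]
    [AddCommGroup P] [Module R P] (f : P →ₗ[R] M) (hP : Module.Projective R P)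
    (hf : Function.Surjective f) :
    ∀ n, pdLE R (n + 1) (ModuleCat.of R M) →
      pdLE R n (ModuleCat.of R (LinearMap.ker f)) := by
  intro n h
  obtain ⟨Qc, g, hQ, hg, hkg⟩ := h
  obtain ⟨e⟩ := schanuel_nonempty f g hP hQ hf hg
  match n with
  | 0 =>
    -- ker g is projective, hence ker f × Q is projective, hence ker f is.
    have hkgP : Module.Projective R (LinearMap.ker g) := hkg
    haveI := hkgP
    haveI := hP
    have hprod : Module.Projective R (LinearMap.ker f × Qc) :=
      Module.Projective.of_equiv e.symm
    exact Module.Projective.of_split (M := LinearMap.ker f × Qc)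
      (LinearMap.inl R _ Qc) (LinearMap.fst R _ Qc) (by ext x; rfl)
  | n + 1 =>
    obtain ⟨P₁, f₁, hP₁, hf₁, hk₁⟩ := hkg
    -- φ : P₁ × P → ker f × Q
    haveI := hP
    haveI := hP₁
    let φ : (P₁ × P) →ₗ[R] (LinearMap.ker f × Qc) :=
      e.symm.toLinearMap.comp (f₁.prodMap LinearMap.id)
    have hφ : Function.Surjective φ :=
      e.symm.surjective.comp (hf₁.prodMap Function.surjective_id)
    obtain ⟨eker⟩ := ker_fst_comp_nonempty φ hφ hQ
    refine ⟨ModuleCat.of R (P₁ × P), (LinearMap.fst R _ Qc).comp φ,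
      (inferInstance : Module.Projective R (P₁ × P)),
      (Prod.fst_surjective).comp hφ, ?_⟩
    -- membership in ker φ
    have hmemφ : ∀ y : P₁ × P, y ∈ LinearMap.ker φ ↔ f₁ y.1 = 0 ∧ y.2 = 0 := by
      intro y
      rw [LinearMap.mem_ker]
      show e.symm ((f₁.prodMap LinearMap.id) y) = 0 ↔ _
      rw [LinearEquiv.map_eq_zero_iff]
      simp [Prod.ext_iff]
    have e₁ : (LinearMap.ker f₁ : Type u) ≃ₗ[R] LinearMap.ker φ :=
      { toFun := fun x => ⟨(x.1, 0), (hmemφ _).2 ⟨x.2, rfl⟩⟩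
        invFun := fun y => ⟨y.1.1, ((hmemφ _).1 y.2).1⟩
        map_add' := fun a b => by apply Subtype.ext; simp
        map_smul' := fun r a => by apply Subtype.ext; simp
        left_inv := fun a => rfl
        right_inv := fun y => by
          apply Subtype.ext
          exact Prod.ext rfl (((hmemφ _).1 y.2).2).symm }
    have step1 : pdLE R n (ModuleCat.of R (LinearMap.ker f₁ × Qc)) :=
      pdLE_prod hQ n _ hk₁
    exact pdLE_congr ((e₁.prodCongr (LinearEquiv.refl R Qc)).trans eker.symm) n step1

end Aux

/-- If every `R`-module has finite projective dimension (`R` is "regular") and `D`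
is an acyclic differential `R`-module with projective underlying module, then the
image of the differentiation is projective. -/
theorem image_projective_of_regular (R : Type u) [CommRing R]
    (hreg : ∀ M : ModuleCat.{u} R, ∃ n : ℕ, pdLE R n M)
    (D : Type u) [AddCommGroup D] [Module R D] (hproj : Module.Projective R D)
    (δ : D →ₗ[R] D) (hsq : δ ∘ₗ δ = 0)
    (hacyclic : LinearMap.ker δ = LinearMap.range δ) :
    Module.Projective R (LinearMap.range δ) := by
  obtain ⟨n, hn⟩ := hreg (ModuleCat.of R (LinearMap.range δ))
  induction n with
  | zero => exact hn
  | succ n ih =>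
    have hk := pdLE_ker_of_pdLE_succ δ.rangeRestrict hproj
      (LinearMap.surjective_rangeRestrict δ) n hn
    rw [LinearMap.ker_rangeRestrict, hacyclic] at hk
    exact ih hk
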